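/- Let γ > −1 be real and let m, n be nonnegative integers. Then for every z in the open unit disk with z ≠ 0, Z_{m,n}^γ(z, z̄) = ((γ+1)_{m+n})² / ((γ+1)_m (γ+1)_n) · z̄^m z^n · Σ_{j=0}^{min(m,n)} (−m)_j (−n)_j / ((−γ−m−n)_j · j!) · |z|^{−2j}, where the Pochhammer symbols (−γ−m−n)_j are nonzero for 0 ≤ j ≤ min(m,n) since γ > −1. -/

import Mathlib

open MeasureTheory Finset

/-- Pochhammer symbol `(a)_k = a (a+1) ⋯ (a+k-1)`. -/
noncomputable def poch (a : ℝ) (k : ℕ) : ℝ := (ascPochhammer ℝ k).eval a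

lemma poch_zero (a : ℝ) : poch a 0 = 1 := by simp [poch]
lemma poch_succ (a : ℝ) (k : ℕ) : poch a (k + 1) = poch a k * (a + k) := by
  simp [poch, ascPochhammer_succ_right, Polynomial.eval_mul]
lemma poch_pos {a : ℝ} (ha : 0 < a) (k : ℕ) : 0 < poch a k := ascPochhammer_pos k a ha
lemma poch_add (a : ℝ) (i j : ℕ) : poch a (i + j) = poch a i * poch (a + i) j := by
  have h := ascPochhammer_mul ℝ i j
  have := congrArg (Polynomial.eval a) h
  simpa [poch, Polynomial.eval_comp] using this.symm

lemma choose_fact_aux (M i : ℕ) :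
    M.choose (i + 1) * (i + 1).factorial = M * ((M - 1).choose i * i.factorial) := by
  cases M with
  | zero => simp
  | succ M' =>
    have h := Nat.add_one_mul_choose_eq M' i
    calc (M' + 1).choose (i + 1) * (i + 1).factorial
        = ((M' + 1).choose (i + 1) * (i + 1)) * i.factorial := by
          rw [Nat.factorial_succ]; ring
      _ = (M' + 1) * (M'.choose i) * i.factorial := by rw [← h]
      _ = (M' + 1) * ((M' + 1 - 1).choose i * i.factorial) := by simp [Nat.mul_assoc]

lemma CV (N : ℕ) : ∀ (M : ℕ) (b : ℝ),
    ∑ i ∈ range (N + 1),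
      (M.choose i : ℝ) * (N.choose i) * i.factorial * poch (b + i) (N - i) = poch (b + M) N := by
  induction N with
  | zero => intro M b; simp [poch_zero]
  | succ N ih =>
    intro M b
    set F : ℕ → ℝ := fun i => (M.choose i : ℝ) * ((N+1).choose i) * i.factorial * poch (b + i) (N + 1 - i) with hF
    set G : ℕ → ℝ := fun i => (M.choose i : ℝ) * (N.choose i) * i.factorial * poch (b + i) (N + 1 - i) with hG
    set H : ℕ → ℝ := fun i => (M : ℝ) * (((M-1).choose i : ℝ) * (N.choose i) * i.factorial * poch ((b+1) + i) (N - i)) with hH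
    have claim1 : ∀ i, F (i+1) = G (i+1) + H i := by
      intro i
      have hc : (((N+1).choose (i+1) : ℕ) : ℝ) = (N.choose i : ℝ) + (N.choose (i+1) : ℝ) := by
        rw [Nat.choose_succ_succ]; push_cast; ring
      have hcf : ((M.choose (i+1) : ℕ) : ℝ) * ((i+1).factorial : ℝ)
          = (M : ℝ) * (((M - 1).choose i : ℝ) * (i.factorial : ℝ)) := by
        exact_mod_cast congrArg (Nat.cast : ℕ → ℝ) (choose_fact_aux M i)
      have hp : b + ((i : ℝ) + 1) = (b + 1) + i := by ring
      simp only [hF, hG, hH, Nat.succ_sub_succ]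
      push_cast
      rw [← hp]
      linear_combination ((M.choose (i+1) : ℝ) * ((i+1).factorial : ℝ) * poch (b + ((i:ℝ)+1)) (N - i)) * hc
        + ((N.choose i : ℝ) * poch (b + ((i:ℝ)+1)) (N - i)) * hcf
    have step1 : ∑ i ∈ range (N + 2), F i = ∑ i ∈ range (N + 2), G i + ∑ i ∈ range (N + 1), H i := by
      rw [Finset.sum_range_succ' F (N+1), Finset.sum_range_succ' G (N+1)]
      have : ∑ i ∈ range (N + 1), F (i+1) = ∑ i ∈ range (N + 1), G (i+1) + ∑ i ∈ range (N + 1), H i := by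
        rw [← Finset.sum_add_distrib]
        exact Finset.sum_congr rfl fun i _ => claim1 i
      rw [this]
      have hF0 : F 0 = G 0 := by simp [hF, hG]
      rw [hF0]; ring
    have claim2 : ∑ i ∈ range (N + 2), G i = (b + N) * poch (b + M) N := by
      rw [Finset.sum_range_succ]
      have : G (N+1) = 0 := by simp [hG, Nat.choose_succ_self]
      rw [this, add_zero, ← ih M b, Finset.mul_sum]
      refine Finset.sum_congr rfl fun i hi => ?_
      have hiN : i ≤ N := by simpa [Nat.lt_succ_iff] using hi
      have h1 : N + 1 - i = (N - i) + 1 := by omega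
      have h2 : (b + i) + ((N - i : ℕ) : ℝ) = b + N := by
        rw [Nat.cast_sub hiN]; ring
      simp only [hG, h1, poch_succ, h2]
      ring
    have claim3 : ∑ i ∈ range (N + 1), H i = (M : ℝ) * poch ((b+1) + (M-1 : ℕ)) N := by
      rw [← Finset.mul_sum, ih (M-1) (b+1)]
    rw [step1, claim2, claim3]
    cases M with
    | zero => simp [poch_succ]; ring
    | succ M' =>
      have : ((M' + 1 - 1 : ℕ) : ℝ) = (M' : ℝ) := by norm_num
      rw [this, poch_succ]
      push_cast
      have : b + 1 + (M' : ℝ) = b + (M' + 1 : ℝ) := by ring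
      rw [this]
      ring

lemma CV2 (M N : ℕ) (b : ℝ) :
    ∑ i ∈ range (min M N + 1),
      (i.factorial : ℝ) * (M.choose i) * (N.choose i) * poch b i * poch (b + i) (M - i) *
        poch (b + i) (N - i) = poch b (M + N) := by
  have h1 : poch b (M + N) = poch b M * poch (b + M) N := poch_add b M N
  rw [h1, ← CV N M b, Finset.mul_sum]
  rw [← Finset.sum_subset (Finset.range_subset_range.2 (by omega : min M N + 1 ≤ N + 1))]
  · refine Finset.sum_congr rfl fun i hi => ?_
    have hiM : i ≤ M := by have := Finset.mem_range.1 hi; omega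
    have h2 : poch b M = poch b i * poch (b + i) (M - i) := by
      have := poch_add b i (M - i)
      rwa [show i + (M - i) = M from by omega] at this
    rw [h2]; ring
  · intro i hi hni
    have hiN : i ≤ N := by have := Finset.mem_range.1 hi; omega
    have : min M N + 1 ≤ i := by rw [Finset.mem_range] at hni; omega
    have hMi : M < i := by omega
    simp [Nat.choose_eq_zero_of_lt hMi]

lemma fact_identity (k i M N : ℕ) (hiM : i ≤ M) (hiN : i ≤ N) :
    (k + i).choose k * M.factorial * N.factorial * k.factorial * i.factorial
      = i.factorial * (M.choose i) * (N.choose i) * (k + i).factorial * (M - i).factorial *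
          (N - i).factorial * i.factorial := by
  have h1 : M.choose i * i.factorial * (M - i).factorial = M.factorial :=
    Nat.choose_mul_factorial_mul_factorial hiM
  have h2 : N.choose i * i.factorial * (N - i).factorial = N.factorial :=
    Nat.choose_mul_factorial_mul_factorial hiN
  have h3 : (k + i).choose k * k.factorial * i.factorial = (k + i).factorial := by
    have := Nat.choose_mul_factorial_mul_factorial (show k ≤ k + i from Nat.le_add_right k i)
    rwa [Nat.add_sub_cancel_left] at this
  rw [← h1, ← h2, ← h3]; ring

lemma Tk {a : ℝ} (ha : 0 < a) (m n k : ℕ) (hkm : k ≤ m) (hkn : k ≤ n) :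
    ∑ j ∈ range (min m n + 1),
      (j.choose k : ℝ) / (poch a j * j.factorial * (m - j).factorial * (n - j).factorial)
      = poch a (m + n - k) /
          (poch a m * poch a n * (m - k).factorial * (n - k).factorial * k.factorial) := by
  set p := min m n with hp
  have hkp : k ≤ p := by omega
  -- drop j < k terms
  have step1 : ∑ j ∈ range (p + 1),
      (j.choose k : ℝ) / (poch a j * j.factorial * (m - j).factorial * (n - j).factorial)
      = ∑ j ∈ Finset.Ico k (p + 1),
      (j.choose k : ℝ) / (poch a j * j.factorial * (m - j).factorial * (n - j).factorial) := by
    rw [Finset.range_eq_Ico]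
    rw [← Finset.sum_Ico_consecutive _ (Nat.zero_le k) (by omega : k ≤ p + 1)]
    have : ∑ j ∈ Finset.Ico 0 k,
        (j.choose k : ℝ) / (poch a j * j.factorial * (m - j).factorial * (n - j).factorial) = 0 := by
      refine Finset.sum_eq_zero fun j hj => ?_
      have : j < k := (Finset.mem_Ico.1 hj).2
      simp [Nat.choose_eq_zero_of_lt this]
    rw [this, zero_add]
  rw [step1, Finset.sum_Ico_eq_sum_range]
  have hrange : p + 1 - k = min (m - k) (n - k) + 1 := by omega
  rw [hrange]
  set M := m - k with hM
  set N := n - k with hN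
  have key := CV2 M N (a + k)
  have hterm : ∀ i ∈ range (min M N + 1),
      ((k + i).choose k : ℝ) /
          (poch a (k + i) * (k + i).factorial * (m - (k + i)).factorial * (n - (k + i)).factorial)
      = ((i.factorial : ℝ) * (M.choose i) * (N.choose i) * poch (a + k) i *
          poch ((a + k) + i) (M - i) * poch ((a + k) + i) (N - i)) *
        (poch a k /
          (poch a m * poch a n * (m - k).factorial * (n - k).factorial * k.factorial)) := by
    intro i hi
    have hiM : i ≤ M := by have := Finset.mem_range.1 hi; omega
    have hiN : i ≤ N := by have := Finset.mem_range.1 hi; omega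
    have hm1 : poch a (k + i) = poch a k * poch (a + k) i := poch_add a k i
    have hm2 : poch a m = poch a (k + i) * poch (a + (k + i : ℕ)) (M - i) := by
      have := poch_add a (k + i) (M - i)
      rwa [show (k + i) + (M - i) = m from by omega] at this
    have hm3 : poch a n = poch a (k + i) * poch (a + (k + i : ℕ)) (N - i) := by
      have := poch_add a (k + i) (N - i)
      rwa [show (k + i) + (N - i) = n from by omega] at this
    have hcast : (a + ((k + i : ℕ) : ℝ)) = (a + k) + i := by push_cast; ring
    rw [hcast] at hm2 hm3
    have e1 : m - (k + i) = M - i := by omega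
    have e2 : n - (k + i) = N - i := by omega
    rw [e1, e2, hm2, hm3, hm1]
    have pk := (poch_pos ha k).ne'
    have pki := (poch_pos (by positivity : (0:ℝ) < a + k) i).ne'
    have pMi := (poch_pos (by positivity : (0:ℝ) < (a + k) + i) (M - i)).ne'
    have pNi := (poch_pos (by positivity : (0:ℝ) < (a + k) + i) (N - i)).ne'
    have f1 := (Nat.cast_pos.2 (Nat.factorial_pos (k+i))).ne' (α := ℝ)
    have f2 := (Nat.cast_pos.2 (Nat.factorial_pos (M-i))).ne' (α := ℝ)
    have f3 := (Nat.cast_pos.2 (Nat.factorial_pos (N-i))).ne' (α := ℝ)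
    have f4 := (Nat.cast_pos.2 (Nat.factorial_pos k)).ne' (α := ℝ)
    have f5 := (Nat.cast_pos.2 (Nat.factorial_pos i)).ne' (α := ℝ)
    have hfact : ((k + i).choose k : ℝ) * M.factorial * N.factorial * k.factorial * i.factorial
        = i.factorial * (M.choose i) * (N.choose i) * (k + i).factorial * (M - i).factorial *
            (N - i).factorial * i.factorial := by
      exact_mod_cast congrArg (Nat.cast : ℕ → ℝ) (fact_identity k i M N hiM hiN)
    have hMf : ((m - k).factorial : ℝ) = (M.factorial : ℝ) := by rw [hM]
    have hNf : ((n - k).factorial : ℝ) = (N.factorial : ℝ) := by rw [hN]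
    rw [hMf, hNf]
    have hfact' : ((k + i).choose k : ℝ) * M.factorial * N.factorial * k.factorial
        = (i.factorial : ℝ) * (M.choose i) * (N.choose i) * (k + i).factorial *
            (M - i).factorial * (N - i).factorial := by
      exact mul_right_cancel₀ f5 hfact
    field_simp
    linear_combination hfact'
  rw [Finset.sum_congr rfl hterm, ← Finset.sum_mul, key]
  have hfin : poch a (m + n - k) = poch a k * poch (a + k) (M + N) := by
    have := poch_add a k (M + N)
    rwa [show k + (M + N) = m + n - k from by omega] at this
  rw [hfin]
  ring

lemma poch_neg_nat (m j : ℕ) : poch (-(m : ℝ)) j = (-1) ^ j * (m.descFactorial j : ℝ) := by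
  unfold poch
  rw [ascPochhammer_eval_neg_eq_descPochhammer, descPochhammer_eval_eq_descFactorial]

lemma poch_neg_tel {a : ℝ} (ha : 0 < a) (s : ℕ) :
    ∀ j, j ≤ s → poch (1 - a - s) j * poch a (s - j) = (-1) ^ j * poch a s := by
  intro j
  induction j with
  | zero => intro _; simp [poch_zero]
  | succ j ih =>
    intro hj
    have hj' : j ≤ s := by omega
    have h1 : s - j = (s - (j + 1)) + 1 := by omega
    have hc : ((s - (j + 1) : ℕ) : ℝ) = (s : ℝ) - j - 1 := by
      rw [Nat.cast_sub hj]; push_cast; ring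
    have ht : (0 : ℝ) < a + ((s - (j + 1) : ℕ) : ℝ) := by positivity
    apply mul_right_cancel₀ ht.ne'
    have e1 : poch (1 - a - s) (j + 1) = poch (1 - a - s) j * ((1 - a - s) + j) := poch_succ _ j
    have e2 : poch a (s - j) = poch a (s - (j + 1)) * (a + ((s - (j + 1) : ℕ) : ℝ)) := by
      rw [h1, poch_succ]
    have := ih hj'
    rw [e1]
    calc poch (1 - a - s) j * (1 - a - s + j) * poch a (s - (j + 1)) * (a + ((s - (j + 1) : ℕ) : ℝ))
        = poch (1 - a - s) j * poch a (s - j) * (1 - a - s + j) := by rw [e2]; ring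
      _ = (-1) ^ j * poch a s * (1 - a - s + j) := by rw [this]
      _ = (-1) ^ (j + 1) * poch a s * (a + ((s - (j + 1) : ℕ) : ℝ)) := by
          rw [hc, pow_succ]; ring

lemma key (γ : ℝ) (hγ : -1 < γ) (m n : ℕ) (u : ℝ) :
    (m.factorial : ℝ) * n.factorial * poch (γ + 1) (m + n) *
      ∑ j ∈ range (min m n + 1),
        (1 - u) ^ j / (poch (γ + 1) j * j.factorial * (m - j).factorial * (n - j).factorial)
    = poch (γ + 1) (m + n) ^ 2 / (poch (γ + 1) m * poch (γ + 1) n) *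
      ∑ j ∈ range (min m n + 1),
        poch (-(m : ℝ)) j * poch (-(n : ℝ)) j / (poch (-γ - m - n) j * j.factorial) * u ^ j := by
  have ha : (0 : ℝ) < γ + 1 := by linarith
  set a : ℝ := γ + 1 with haa
  set p := min m n with hp
  -- Step 1: binomially expand the left side and swap sums
  have expand : ∀ j ∈ range (p + 1),
      (1 - u) ^ j / (poch a j * j.factorial * (m - j).factorial * (n - j).factorial)
      = ∑ k ∈ range (p + 1), (-u) ^ k * (j.choose k : ℝ) /
          (poch a j * j.factorial * (m - j).factorial * (n - j).factorial) := by
    intro j hj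
    have hjp : j ≤ p := by have := Finset.mem_range.1 hj; omega
    have hpow : (1 - u) ^ j = ∑ k ∈ range (j + 1), (-u) ^ k * (j.choose k : ℝ) := by
      rw [show (1 : ℝ) - u = -u + 1 from by ring, add_pow]
      simp
    have hext : ∑ k ∈ range (j + 1), (-u) ^ k * (j.choose k : ℝ)
        = ∑ k ∈ range (p + 1), (-u) ^ k * (j.choose k : ℝ) := by
      apply Finset.sum_subset (Finset.range_subset_range.2 (by omega))
      intro k _ hk
      have : j < k := by simp at hk; omega
      simp [Nat.choose_eq_zero_of_lt this]
    rw [hpow, hext, Finset.sum_div]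
  rw [Finset.mul_sum]
  have step : ∑ j ∈ range (p + 1),
      (m.factorial : ℝ) * n.factorial * poch a (m + n) *
        ((1 - u) ^ j / (poch a j * j.factorial * (m - j).factorial * (n - j).factorial))
      = ∑ j ∈ range (p + 1), ∑ k ∈ range (p + 1),
          (m.factorial : ℝ) * n.factorial * poch a (m + n) *
            ((-u) ^ k * (j.choose k : ℝ) /
              (poch a j * j.factorial * (m - j).factorial * (n - j).factorial)) := by
    refine Finset.sum_congr rfl fun j hj => ?_
    rw [expand j hj, Finset.mul_sum]
  rw [step, Finset.sum_comm]
  rw [Finset.mul_sum]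
  refine Finset.sum_congr rfl fun k hk => ?_
  have hkp : k ≤ p := by have := Finset.mem_range.1 hk; omega
  have hkm : k ≤ m := by omega
  have hkn : k ≤ n := by omega
  -- pull the constants out of the inner j-sum and apply Tk
  have inner : ∑ j ∈ range (p + 1),
      (m.factorial : ℝ) * n.factorial * poch a (m + n) *
        ((-u) ^ k * (j.choose k : ℝ) /
          (poch a j * j.factorial * (m - j).factorial * (n - j).factorial))
      = (m.factorial : ℝ) * n.factorial * poch a (m + n) * (-u) ^ k *
          (poch a (m + n - k) /
            (poch a m * poch a n * (m - k).factorial * (n - k).factorial * k.factorial)) := by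
    rw [← Tk ha m n k hkm hkn, Finset.mul_sum]
    refine Finset.sum_congr rfl fun j _ => ?_
    ring
  rw [inner]
  -- now the termwise identity in k
  have hceq : -γ - (m : ℝ) - n = 1 - a - ((m + n : ℕ) : ℝ) := by push_cast [haa]; ring
  have htel : poch (-γ - (m : ℝ) - n) k * poch a (m + n - k) = (-1) ^ k * poch a (m + n) := by
    rw [hceq]; exact poch_neg_tel ha (m + n) k (by omega)
  have hck : poch (-γ - (m : ℝ) - n) k ≠ 0 := by
    intro h0
    rw [h0, zero_mul] at htel
    have := (poch_pos ha (m + n)).ne'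
    have hpow : ((-1 : ℝ)) ^ k ≠ 0 := by positivity
    exact this (by
      have := htel.symm
      rcases mul_eq_zero.1 this with h | h
      · exact absurd h hpow
      · exact h)
  have hdm : ((m - k).factorial : ℝ) * (m.descFactorial k : ℝ) = (m.factorial : ℝ) := by
    exact_mod_cast congrArg (Nat.cast : ℕ → ℝ) (Nat.factorial_mul_descFactorial hkm)
  have hdn : ((n - k).factorial : ℝ) * (n.descFactorial k : ℝ) = (n.factorial : ℝ) := by
    exact_mod_cast congrArg (Nat.cast : ℕ → ℝ) (Nat.factorial_mul_descFactorial hkn)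
  rw [poch_neg_nat m k, poch_neg_nat n k]
  have pm := (poch_pos ha m).ne'
  have pn := (poch_pos ha n).ne'
  have pmn := (poch_pos ha (m + n)).ne'
  have pmnk := (poch_pos ha (m + n - k)).ne'
  have fmk := (Nat.cast_pos.2 (Nat.factorial_pos (m - k))).ne' (α := ℝ)
  have fnk := (Nat.cast_pos.2 (Nat.factorial_pos (n - k))).ne' (α := ℝ)
  have fk := (Nat.cast_pos.2 (Nat.factorial_pos k)).ne' (α := ℝ)
  field_simp
  linear_combination
    ((m.factorial : ℝ) * n.factorial * u ^ k * (-1) ^ k) * htel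
    - (((-1 : ℝ) ^ k) ^ 2 * poch a (m + n) * u ^ k *
      (n.descFactorial k : ℝ) * (n - k).factorial) * hdm
    - (((-1 : ℝ) ^ k) ^ 2 * poch a (m + n) * u ^ k *
      (m.factorial : ℝ)) * hdn

/-- Generalized Zernike polynomial `Z_{m,n}^γ(z, z̄)`. -/
noncomputable def Zern (γ : ℝ) (m n : ℕ) (z : ℂ) : ℂ :=
  (Nat.factorial m : ℂ) * (Nat.factorial n : ℂ) * ((poch (γ + 1) (m + n) : ℝ) : ℂ) *
    ∑ j ∈ Finset.range (min m n + 1),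
      ((-1 : ℂ) ^ j * (((1 - ‖z‖ ^ 2) ^ j : ℝ) : ℂ) *
        (starRingEnd ℂ z) ^ (m - j) * z ^ (n - j)) /
      ((poch (γ + 1) j * Nat.factorial j * Nat.factorial (m - j) * Nat.factorial (n - j) : ℝ) : ℂ)

theorem zernike_gauss_hypergeometric' (γ : ℝ) (hγ : -1 < γ) (m n : ℕ) (z : ℂ)
    (hz : z ∈ Metric.ball (0 : ℂ) 1) (hz0 : z ≠ 0) :
    Zern γ m n z =
      ((poch (γ + 1) (m + n) ^ 2 / (poch (γ + 1) m * poch (γ + 1) n) : ℝ) : ℂ) *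
        (starRingEnd ℂ z) ^ m * z ^ n *
        ∑ j ∈ Finset.range (min m n + 1),
          ((poch (-(m : ℝ)) j * poch (-(n : ℝ)) j /
              (poch (-γ - m - n) j * Nat.factorial j) *
            ((‖z‖ ^ 2)⁻¹) ^ j : ℝ) : ℂ) := by
  have habs : ‖z‖ ≠ 0 := norm_ne_zero_iff.2 hz0
  have hr2 : (0 : ℝ) < ‖z‖ ^ 2 := by positivity
  set r2 : ℝ := ‖z‖ ^ 2 with hr2def
  set u : ℝ := r2⁻¹ with hudef
  have hzz : ((r2 : ℝ) : ℂ) = (starRingEnd ℂ z) * z := by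
    rw [hr2def, Complex.sq_norm]
    rw [← Complex.mul_conj]
    ring
  have hru : r2 * (1 - u) = r2 - 1 := by
    rw [hudef, mul_sub, mul_inv_cancel₀ hr2.ne', mul_one]
  have hterm : ∀ j ∈ Finset.range (min m n + 1),
      ((Nat.factorial m : ℂ) * (Nat.factorial n : ℂ) * ((poch (γ + 1) (m + n) : ℝ) : ℂ)) *
        (((-1 : ℂ) ^ j * (((1 - r2) ^ j : ℝ) : ℂ) *
          (starRingEnd ℂ z) ^ (m - j) * z ^ (n - j)) /
        ((poch (γ + 1) j * Nat.factorial j * Nat.factorial (m - j) * Nat.factorial (n - j) : ℝ) : ℂ))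
      = (starRingEnd ℂ z) ^ m * z ^ n *
          ((((m.factorial : ℝ) * n.factorial * poch (γ + 1) (m + n)) *
            ((1 - u) ^ j / (poch (γ + 1) j * j.factorial * (m - j).factorial *
              (n - j).factorial)) : ℝ) : ℂ) := by
    intro j hj
    have hjm : j ≤ m := by have := Finset.mem_range.1 hj; omega
    have hjn : j ≤ n := by have := Finset.mem_range.1 hj; omega
    have he : (starRingEnd ℂ z) ^ (m - j) * z ^ (n - j) * ((starRingEnd ℂ z) * z) ^ j
        = (starRingEnd ℂ z) ^ m * z ^ n := by
      rw [mul_pow, show (starRingEnd ℂ z) ^ (m - j) * z ^ (n - j) *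
          ((starRingEnd ℂ z) ^ j * z ^ j)
        = ((starRingEnd ℂ z) ^ (m - j) * (starRingEnd ℂ z) ^ j) * (z ^ (n - j) * z ^ j) from by
          ring, ← pow_add, ← pow_add, Nat.sub_add_cancel hjm, Nat.sub_add_cancel hjn]
    have hnum : ((-1 : ℂ)) ^ j * (((1 - r2) ^ j : ℝ) : ℂ) *
        (starRingEnd ℂ z) ^ (m - j) * z ^ (n - j)
        = (starRingEnd ℂ z) ^ m * z ^ n * (((1 - u) ^ j : ℝ) : ℂ) := by
      have h1 : ((-1 : ℂ)) ^ j * (((1 - r2) ^ j : ℝ) : ℂ) = (((r2 - 1 : ℝ) : ℂ)) ^ j := by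
        push_cast
        rw [← mul_pow]
        congr 1
        ring
      have h2 : (starRingEnd ℂ z) ^ m * z ^ n * (((1 - u) ^ j : ℝ) : ℂ)
          = (starRingEnd ℂ z) ^ (m - j) * z ^ (n - j) * (((r2 - 1 : ℝ) : ℂ)) ^ j := by
        rw [← he, mul_assoc, Complex.ofReal_pow, ← mul_pow, ← hzz, ← Complex.ofReal_mul, hru]
      rw [h2, h1]
      ring
    have hDpos : (0 : ℝ) < poch (γ + 1) j * j.factorial * (m - j).factorial * (n - j).factorial := by
      have := poch_pos (show (0:ℝ) < γ + 1 by linarith) j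
      positivity
    have hD : ((poch (γ + 1) j * Nat.factorial j * Nat.factorial (m - j) *
        Nat.factorial (n - j) : ℝ) : ℂ) ≠ 0 := by
      exact_mod_cast Complex.ofReal_ne_zero.2 hDpos.ne'
    rw [mul_div_assoc', hnum]
    push_cast
    field_simp
  have lhs_eq : Zern γ m n z = (starRingEnd ℂ z) ^ m * z ^ n *
      ((((m.factorial : ℝ) * n.factorial * poch (γ + 1) (m + n)) *
        ∑ j ∈ Finset.range (min m n + 1),
          (1 - u) ^ j / (poch (γ + 1) j * j.factorial * (m - j).factorial *
            (n - j).factorial) : ℝ) : ℂ) := by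
    unfold Zern
    rw [Finset.mul_sum]
    rw [Finset.sum_congr rfl hterm]
    rw [← Finset.mul_sum, ← Complex.ofReal_sum, ← Finset.mul_sum]
  rw [lhs_eq, key γ hγ m n u]
  push_cast
  ring
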